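/- Let G ∈ F_q^{k×(k+t−1)} be a generator matrix of a [k+t−1, k] MDS code, β ≥ 1, and let q ∈ F_q^{α×β(k+t−1)} be a matrix such that for every set T ⊆ [k+t−1] of size t, the rank of the submatrix of q consisting of the β-thick columns indexed by T equals the number of nonzero columns of that submatrix. Then rank((G ⊗ 1_β) ⊙ q) = |colsupp(q)|, i.e., the rank of the column-wise Khatri-Rao product of G ⊗ 1_β with q equals the number of nonzero columns of q. -/

import Mathlib

open Matrix

/-- General principle: the rank of a matrix equals the number of its nonzero columns
iff the nonzero columns are linearly independent. Here `P` is any predicate such that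
columns outside `P` vanish. -/
lemma rank_eq_card_filter_iff {F : Type*} [Field F] {m ι : Type*} [Fintype m] [Fintype ι]
    (A : Matrix m ι F) (P : ι → Prop) [DecidablePred P]
    (h0 : ∀ j, ¬ P j → ∀ i, A i j = 0) :
    A.rank = (Finset.univ.filter P).card ↔
      LinearIndependent F (fun j : {j // P j} => Aᵀ j.1) := by
  have hspan : Submodule.span F (Set.range Aᵀ) =
      Submodule.span F (Set.range (fun j : {j // P j} => Aᵀ j.1)) := by
    apply le_antisymm
    · rw [Submodule.span_le]
      rintro _ ⟨j, rfl⟩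
      by_cases h : P j
      · exact Submodule.subset_span ⟨⟨j, h⟩, rfl⟩
      · have hz : Aᵀ j = 0 := funext fun i => h0 j h i
        rw [hz]; exact Submodule.zero_mem _
    · rw [Submodule.span_le]
      rintro _ ⟨j, rfl⟩
      exact Submodule.subset_span ⟨j.1, rfl⟩
  rw [Matrix.rank_eq_finrank_span_cols, show A.col = Aᵀ from rfl, hspan,
    linearIndependent_iff_card_eq_finrank_span, Set.finrank, Fintype.card_subtype]
  exact ⟨fun h => h.symm, fun h => h.symm⟩

/-- From the MDS property, for every set `T` of `t` columns there is a row-space vector of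
`G` whose support is exactly `T`. -/
lemma exists_vec_support_eq {F : Type*} [Field F] {k t : ℕ} (hk : 1 ≤ k) (ht : 1 ≤ t)
    (G : Matrix (Fin k) (Fin (k + t - 1)) F)
    (hMDS : ∀ s : Fin k ↪ Fin (k + t - 1), IsUnit (G.submatrix id s).det)
    (T : Finset (Fin (k + t - 1))) (hT : T.card = t) :
    ∃ y : Fin k → F, (∀ c ∈ T, (∑ i, y i * G i c) ≠ 0) ∧
      (∀ c ∉ T, (∑ i, y i * G i c) = 0) := by
  classical
  obtain ⟨c₀, hc₀⟩ : T.Nonempty := Finset.card_pos.mp (by omega)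
  have hcompl : Tᶜ.card = k - 1 := by
    have := Finset.card_compl T
    simp only [Fintype.card_fin] at this
    omega
  have hc₀c : c₀ ∉ Tᶜ := by simp [hc₀]
  set S : Finset (Fin (k + t - 1)) := insert c₀ Tᶜ with hSdef
  have hS : S.card = k := by
    rw [hSdef, Finset.card_insert_of_notMem hc₀c]; omega
  set e := S.orderIsoOfFin hS with he
  have hinj : Function.Injective (fun j : Fin k => (e j : Fin (k + t - 1))) := by
    intro a b hab
    exact e.injective (Subtype.ext hab)
  set emb : Fin k ↪ Fin (k + t - 1) := ⟨fun j => (e j : Fin (k + t - 1)), hinj⟩ with hemb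
  have hmemS : ∀ j, (emb j) ∈ S := fun j => (e j).2
  set A := G.submatrix id emb with hA
  have hAdet : IsUnit A.det := hMDS emb
  set j₀ := e.symm ⟨c₀, Finset.mem_insert_self _ _⟩ with hj₀
  have hembj₀ : emb j₀ = c₀ := by
    simp only [hemb, hj₀, Function.Embedding.coeFn_mk]
    rw [OrderIso.apply_symm_apply]
  set y : Fin k → F := fun i => A⁻¹ j₀ i with hy
  have key : ∀ j, (∑ i, y i * A i j) = (1 : Matrix (Fin k) (Fin k) F) j₀ j := by
    intro j
    rw [← Matrix.nonsing_inv_mul A hAdet, Matrix.mul_apply]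
  have hGA : ∀ j, (∑ i, y i * G i (emb j)) = ∑ i, y i * A i j := by
    intro j; rfl
  have hout : ∀ c ∉ T, (∑ i, y i * G i c) = 0 := by
    intro c hc
    have hcS : c ∈ S := Finset.mem_insert_of_mem (Finset.mem_compl.mpr hc)
    set j := e.symm ⟨c, hcS⟩ with hj
    have hembj : emb j = c := by
      simp only [hemb, hj, Function.Embedding.coeFn_mk]
      rw [OrderIso.apply_symm_apply]
    have hjne : j₀ ≠ j := by
      intro hjj
      apply hc
      rw [← hembj, ← hjj, hembj₀] at *
      exact hc₀
    calc (∑ i, y i * G i c) = ∑ i, y i * A i j := by rw [← hembj]; exact hGA j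
      _ = (1 : Matrix (Fin k) (Fin k) F) j₀ j := key j
      _ = 0 := Matrix.one_apply_ne hjne
  have hc₀val : (∑ i, y i * G i c₀) = 1 := by
    calc (∑ i, y i * G i c₀) = ∑ i, y i * A i j₀ := by rw [← hembj₀]; exact hGA j₀
      _ = (1 : Matrix (Fin k) (Fin k) F) j₀ j₀ := key j₀
      _ = 1 := Matrix.one_apply_eq j₀
  refine ⟨y, ?_, hout⟩
  intro c hcT hczero
  by_cases hcc₀ : c = c₀
  · rw [hcc₀, hc₀val] at hczero
    exact one_ne_zero hczero
  · -- c ∈ T, c ≠ c₀, so c ∉ S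
    have hcS : c ∉ S := by
      simp only [hSdef, Finset.mem_insert, Finset.mem_compl]
      push_neg
      exact ⟨hcc₀, hcT⟩
    have hinj' : Function.Injective (fun j : Fin k => if j = j₀ then c else emb j) := by
      intro a b hab
      simp only at hab
      by_cases ha : a = j₀ <;> by_cases hb : b = j₀
      · rw [ha, hb]
      · rw [if_pos ha, if_neg hb] at hab
        exact absurd (hab ▸ hmemS b) hcS
      · rw [if_neg ha, if_pos hb] at hab
        exact absurd (hab ▸ hmemS a) hcS
      · rw [if_neg ha, if_neg hb] at hab
        exact emb.injective hab
    set emb' : Fin k ↪ Fin (k + t - 1) := ⟨fun j => if j = j₀ then c else emb j, hinj'⟩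
      with hemb'
    set A' := G.submatrix id emb' with hA'
    have hA'det : IsUnit A'.det := hMDS emb'
    have hzero : Matrix.vecMul y A' = 0 := by
      funext j
      show (∑ i, y i * A' i j) = 0
      by_cases hj : j = j₀
      · calc (∑ i, y i * A' i j) = ∑ i, y i * G i c := by
              refine Finset.sum_congr rfl fun i _ => ?_
              simp [hA', hemb', hj, Matrix.submatrix_apply]
          _ = 0 := hczero
      · calc (∑ i, y i * A' i j) = ∑ i, y i * A i j := by
              refine Finset.sum_congr rfl fun i _ => ?_
              simp [hA', hA, hemb', hj, Matrix.submatrix_apply]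
          _ = (1 : Matrix (Fin k) (Fin k) F) j₀ j := key j
          _ = 0 := Matrix.one_apply_ne (Ne.symm hj)
    have hy0 : y = 0 := by
      have h1 : Matrix.vecMul (Matrix.vecMul y A') A'⁻¹ = Matrix.vecMul y (A' * A'⁻¹) :=
        (Matrix.vecMul_vecMul y A' A'⁻¹)
      rw [hzero, Matrix.zero_vecMul, Matrix.mul_nonsing_inv A' hA'det,
        Matrix.vecMul_one] at h1
      exact h1.symm
    have : (∑ i, y i * G i c₀) = 0 := by
      rw [hy0]; simp
    rw [hc₀val] at this
    exact one_ne_zero this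

/-- Rank of the column-wise Khatri-Rao product of an MDS generator matrix (with each
column repeated `β` times) with a query matrix `q` of full support-rank: it equals the
number of nonzero columns of `q`. Columns are indexed by pairs `(i, s)` where `i` is a
server (thick-column) index and `s ∈ [β]` an iteration index. -/
theorem rank_kron_khatriRao_eq_colsupp {F : Type*} [Field F] [DecidableEq F]
    {k t α β : ℕ} (hk : 1 ≤ k) (ht : 1 ≤ t) (hβ : 1 ≤ β)
    (G : Matrix (Fin k) (Fin (k + t - 1)) F)
    -- MDS: every `k × k` submatrix of `G` is invertible
    (hMDS : ∀ s : Fin k ↪ Fin (k + t - 1), IsUnit (G.submatrix id s).det)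
    (q : Matrix (Fin α) (Fin (k + t - 1) × Fin β) F)
    -- full support-rank: for every set `T` of `t` thick columns, the rank of the
    -- corresponding submatrix of `q` equals its number of nonzero columns
    (hq : ∀ T : Finset (Fin (k + t - 1)), T.card = t →
      (Matrix.rank (fun (i : Fin α) (p : {p : Fin (k + t - 1) × Fin β // p.1 ∈ T}) =>
          q i p.1))
        = (Finset.univ.filter (fun p : {p : Fin (k + t - 1) × Fin β // p.1 ∈ T} =>
            ∃ i, q i p.1 ≠ 0)).card) :
    Matrix.rank (fun (ia : Fin k × Fin α) (p : Fin (k + t - 1) × Fin β) =>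
        G ia.1 p.1 * q ia.2 p)
      = (Finset.univ.filter (fun p : Fin (k + t - 1) × Fin β => ∃ i, q i p ≠ 0)).card := by
  classical
  set M : Matrix (Fin k × Fin α) (Fin (k + t - 1) × Fin β) F :=
    fun ia p => G ia.1 p.1 * q ia.2 p with hM
  have h0 : ∀ p : Fin (k + t - 1) × Fin β, ¬ (∃ i, q i p ≠ 0) → ∀ ia, M ia p = 0 := by
    intro p hp ia
    push_neg at hp
    simp [hM, hp ia.2]
  rw [rank_eq_card_filter_iff M (fun p => ∃ i, q i p ≠ 0) h0]
  rw [Fintype.linearIndependent_iff]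
  rintro g hg ⟨p₀, hp₀⟩
  -- extend the coefficients to all pairs
  set lam : Fin (k + t - 1) × Fin β → F :=
    fun p => if h : ∃ i, q i p ≠ 0 then g ⟨p, h⟩ else 0 with hlam
  have hsum : ∀ ia : Fin k × Fin α,
      (∑ p : Fin (k + t - 1) × Fin β, lam p * (G ia.1 p.1 * q ia.2 p)) = 0 := by
    intro ia
    have h1 := congrFun hg ia
    rw [Finset.sum_apply] at h1
    simp only [Pi.smul_apply, smul_eq_mul, Pi.zero_apply, Matrix.transpose_apply] at h1
    have h2 : (∑ p : Fin (k + t - 1) × Fin β, lam p * (G ia.1 p.1 * q ia.2 p))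
        = ∑ p ∈ Finset.univ.filter (fun p => ∃ i, q i p ≠ 0),
            lam p * (G ia.1 p.1 * q ia.2 p) := by
      refine (Finset.sum_subset (Finset.filter_subset _ _) ?_).symm
      intro p _ hpn
      simp only [Finset.mem_filter, Finset.mem_univ, true_and] at hpn
      rw [hlam]
      simp [hpn]
    rw [h2]
    rw [Finset.sum_subtype (p := fun p : Fin (k + t - 1) × Fin β => ∃ i, q i p ≠ 0)
      (Finset.univ.filter (fun p : Fin (k + t - 1) × Fin β => ∃ i, q i p ≠ 0))
      (by intro p; simp) (fun p => lam p * (G ia.1 p.1 * q ia.2 p))]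
    refine Eq.trans (Finset.sum_congr rfl fun x _ => ?_) h1
    simp only [hlam]
    rw [dif_pos x.2]
  -- choose a t-set T containing p₀.1
  obtain ⟨T, hsub, hT⟩ : ∃ T : Finset (Fin (k + t - 1)), {p₀.1} ⊆ T ∧ T.card = t := by
    apply Finset.exists_superset_card_eq
    · simp; omega
    · simp only [Fintype.card_fin]; omega
  have hc₀T : p₀.1 ∈ T := hsub (Finset.mem_singleton_self _)
  obtain ⟨y, hyin, hyout⟩ := exists_vec_support_eq hk ht G hMDS T hT
  set μ : Fin (k + t - 1) → F := fun c => ∑ i, y i * G i c with hμ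
  have hsum2 : ∀ a : Fin α,
      (∑ p : Fin (k + t - 1) × Fin β, (lam p * μ p.1) * q a p) = 0 := by
    intro a
    have h1 : (∑ i, y i * ∑ p : Fin (k + t - 1) × Fin β,
        lam p * (G i p.1 * q a p)) = 0 := by
      refine Finset.sum_eq_zero fun i _ => ?_
      rw [hsum (i, a)]
      exact mul_zero _
    calc (∑ p : Fin (k + t - 1) × Fin β, (lam p * μ p.1) * q a p)
        = ∑ p : Fin (k + t - 1) × Fin β, ∑ i, y i * (lam p * (G i p.1 * q a p)) := by
          refine Finset.sum_congr rfl fun p _ => ?_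
          simp only [hμ]
          rw [Finset.mul_sum, Finset.sum_mul]
          refine Finset.sum_congr rfl fun i _ => ?_
          ring
      _ = ∑ i, ∑ p : Fin (k + t - 1) × Fin β, y i * (lam p * (G i p.1 * q a p)) :=
          Finset.sum_comm
      _ = ∑ i, y i * ∑ p : Fin (k + t - 1) × Fin β, lam p * (G i p.1 * q a p) := by
          refine Finset.sum_congr rfl fun i _ => ?_
          rw [Finset.mul_sum]
      _ = 0 := h1
  -- independence of nonzero q-columns within T
  have h0' : ∀ p : {p : Fin (k + t - 1) × Fin β // p.1 ∈ T}, ¬ (∃ i, q i p.1 ≠ 0) →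
      ∀ i, q i p.1 = 0 := by
    intro p hp i
    push_neg at hp
    exact hp i
  have lin := (rank_eq_card_filter_iff
    (fun (i : Fin α) (p : {p : Fin (k + t - 1) × Fin β // p.1 ∈ T}) => q i p.1)
    (fun p => ∃ i, q i p.1 ≠ 0) h0').mp (hq T hT)
  rw [Fintype.linearIndependent_iff] at lin
  set g' : {x : {p : Fin (k + t - 1) × Fin β // p.1 ∈ T} // ∃ i, q i x.1 ≠ 0} → F :=
    fun x => lam x.1.1 * μ x.1.1.1 with hg'
  have hsum' : (∑ x, g' x • (fun (i : Fin α) (p : {p : Fin (k + t - 1) × Fin β //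
      p.1 ∈ T}) => q i p.1)ᵀ x.1) = 0 := by
    funext a
    rw [Finset.sum_apply]
    have step1 : (∑ p ∈ Finset.univ.filter
        (fun p : Fin (k + t - 1) × Fin β => p.1 ∈ T), (lam p * μ p.1) * q a p) = 0 := by
      refine (Finset.sum_subset (Finset.filter_subset _ _) ?_).trans (hsum2 a)
      intro p _ hpn
      simp only [Finset.mem_filter, Finset.mem_univ, true_and] at hpn
      have hz : μ p.1 = 0 := hyout p.1 hpn
      rw [hz]
      ring
    have step2 : (∑ x : {p : Fin (k + t - 1) × Fin β // p.1 ∈ T},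
        (lam x.1 * μ x.1.1) * q a x.1) = 0 := by
      rw [← Finset.sum_subtype (p := fun p : Fin (k + t - 1) × Fin β => p.1 ∈ T)
        (Finset.univ.filter (fun p : Fin (k + t - 1) × Fin β => p.1 ∈ T))
        (by intro p; simp) (fun p => (lam p * μ p.1) * q a p)]
      exact step1
    have step3 : (∑ x ∈ Finset.univ.filter
        (fun x : {p : Fin (k + t - 1) × Fin β // p.1 ∈ T} => ∃ i, q i x.1 ≠ 0),
        (lam x.1 * μ x.1.1) * q a x.1) = 0 := by
      refine (Finset.sum_subset (Finset.filter_subset _ _) ?_).trans step2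
      intro x _ hxn
      simp only [Finset.mem_filter, Finset.mem_univ, true_and] at hxn
      push_neg at hxn
      rw [hxn a, mul_zero]
    have step4 : (∑ x : {x : {p : Fin (k + t - 1) × Fin β // p.1 ∈ T} // ∃ i, q i x.1 ≠ 0},
        (lam x.1.1 * μ x.1.1.1) * q a x.1.1) = 0 := by
      rw [← Finset.sum_subtype
        (p := fun x : {p : Fin (k + t - 1) × Fin β // p.1 ∈ T} => ∃ i, q i x.1 ≠ 0)
        (Finset.univ.filter
          (fun x : {p : Fin (k + t - 1) × Fin β // p.1 ∈ T} => ∃ i, q i x.1 ≠ 0))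
        (by intro x; simp)
        (fun x => (lam x.1 * μ x.1.1) * q a x.1)]
      exact step3
    exact Eq.trans (Finset.sum_congr rfl fun x _ => rfl) step4
  have hfin := lin g' hsum' ⟨⟨p₀, hc₀T⟩, hp₀⟩
  rw [hg'] at hfin
  simp only at hfin
  have hμne : μ p₀.1 ≠ 0 := hyin p₀.1 hc₀T
  have hlamp₀ : lam p₀ = 0 := by
    rcases mul_eq_zero.mp hfin with h | h
    · exact h
    · exact absurd h hμne
  rw [hlam] at hlamp₀
  simp only [hp₀, dif_pos] at hlamp₀
  exact hlamp₀
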